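/- Let 𝕂 be a non-discrete topological field, E and F Hausdorff topological 𝕂-vector spaces, U ⊆ E open, and f : U → F a map. Suppose there exists a continuous map f¹ : U⁽¹⁾ → F, where U⁽¹⁾ = {(x,v,t) ∈ U × E × 𝕂 : x + t•v ∈ U}, such that f(x + t•v) − f(x) = t • f¹(x,v,t) for all (x,v,t) ∈ U⁽¹⁾. Then for each x ∈ U the map df(x) : E → F defined by df(x)(v) := f¹(x,v,0) is additive and 𝕂-homogeneous (i.e., 𝕂-linear). -/

import Mathlib

/-- Two maps continuous within an open set `S ∋ 0`, agreeing on the dense set of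
nonzero points of `S`, agree at `0`. -/
lemma bgn_key {𝕂 F : Type*} [TopologicalSpace 𝕂] [Zero 𝕂] [TopologicalSpace F] [T2Space F]
    (hK : Dense {t : 𝕂 | t ≠ 0}) {g h : 𝕂 → F} {S : Set 𝕂} (hS : IsOpen S) (h0 : (0:𝕂) ∈ S)
    (hg : ContinuousWithinAt g S 0) (hh : ContinuousWithinAt h S 0)
    (heq : ∀ t ∈ S, t ≠ 0 → g t = h t) : g 0 = h 0 := by
  have hd : (0:𝕂) ∈ closure (S ∩ {t | t ≠ 0}) := hK.open_subset_closure_inter hS h0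
  have hne : (nhdsWithin (0:𝕂) (S ∩ {t | t ≠ 0})).NeBot :=
    mem_closure_iff_nhdsWithin_neBot.mp hd
  have hg' : Filter.Tendsto g (nhdsWithin (0:𝕂) (S ∩ {t | t ≠ 0})) (nhds (g 0)) :=
    hg.mono Set.inter_subset_left
  have hh' : Filter.Tendsto h (nhdsWithin (0:𝕂) (S ∩ {t | t ≠ 0})) (nhds (h 0)) :=
    hh.mono Set.inter_subset_left
  have : Filter.Tendsto g (nhdsWithin (0:𝕂) (S ∩ {t | t ≠ 0})) (nhds (h 0)) := by
    refine hh'.congr' ?_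
    filter_upwards [self_mem_nhdsWithin] with t ht
    exact (heq t ht.1 ht.2).symm
  exact tendsto_nhds_unique hg' this

/-- BGN differential calculus: if `f : U → F` admits a continuous difference-quotient map
`f¹` on `U⁽¹⁾ = {(x,v,t) : x ∈ U, x + t•v ∈ U}` satisfying
`f(x + t•v) - f(x) = t • f¹(x,v,t)`, then for each `x ∈ U` the differential
`df(x) : v ↦ f¹(x,v,0)` is additive and `𝕂`-homogeneous. -/
theorem stmt_0 (𝕂 : Type*) [Field 𝕂] [TopologicalSpace 𝕂] [IsTopologicalRing 𝕂] [T2Space 𝕂]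
    (hK : Dense {t : 𝕂 | t ≠ 0})
    (E F : Type*) [AddCommGroup E] [Module 𝕂 E] [TopologicalSpace E]
    [IsTopologicalAddGroup E] [ContinuousSMul 𝕂 E] [T2Space E]
    [AddCommGroup F] [Module 𝕂 F] [TopologicalSpace F]
    [IsTopologicalAddGroup F] [ContinuousSMul 𝕂 F] [T2Space F]
    (U : Set E) (hU : IsOpen U) (f : E → F) (f1 : E × E × 𝕂 → F)
    (hcont : ContinuousOn f1 {p : E × E × 𝕂 | p.1 ∈ U ∧ p.1 + p.2.2 • p.2.1 ∈ U})
    (hdq : ∀ (x v : E) (t : 𝕂), x ∈ U → x + t • v ∈ U →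
      f (x + t • v) - f x = t • f1 (x, v, t))
    (x : E) (hx : x ∈ U) :
    (∀ v w : E, f1 (x, v + w, 0) = f1 (x, v, 0) + f1 (x, w, 0)) ∧
    (∀ (r : 𝕂) (v : E), f1 (x, r • v, 0) = r • f1 (x, v, 0)) := by
  set D : Set (E × E × 𝕂) := {p : E × E × 𝕂 | p.1 ∈ U ∧ p.1 + p.2.2 • p.2.1 ∈ U} with hD
  constructor
  · intro v w
    set S : Set 𝕂 := {t : 𝕂 | x + t • (v + w) ∈ U ∧ x + t • w ∈ U ∧ x + t • w + t • v ∈ U}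
      with hSdefA
    have hSopen : IsOpen S := by
      have h1 : IsOpen {t : 𝕂 | x + t • (v + w) ∈ U} := hU.preimage (by fun_prop)
      have h2 : IsOpen {t : 𝕂 | x + t • w ∈ U} := hU.preimage (by fun_prop)
      have h3 : IsOpen {t : 𝕂 | x + t • w + t • v ∈ U} := hU.preimage (by fun_prop)
      exact (h1.inter (h2.inter h3))
    have h0S : (0:𝕂) ∈ S := by simp [hSdefA, hx]
    have hgc : ContinuousWithinAt (fun t : 𝕂 => f1 (x, v + w, t)) S 0 := by
      refine (hcont.comp (Continuous.continuousOn (by fun_prop)) ?_).continuousWithinAt h0S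
      intro t ht
      exact ⟨hx, ht.1⟩
    have hhc : ContinuousWithinAt
        (fun t : 𝕂 => f1 (x + t • w, v, t) + f1 (x, w, t)) S 0 := by
      have c1 : ContinuousOn (fun t : 𝕂 => f1 (x + t • w, v, t)) S := by
        refine hcont.comp (Continuous.continuousOn (by fun_prop)) ?_
        intro t ht
        exact ⟨ht.2.1, ht.2.2⟩
      have c2 : ContinuousOn (fun t : 𝕂 => f1 (x, w, t)) S := by
        refine hcont.comp (Continuous.continuousOn (by fun_prop)) ?_
        intro t ht
        exact ⟨hx, ht.2.1⟩
      exact ((c1.add c2)).continuousWithinAt h0S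
    have heq : ∀ t ∈ S, t ≠ 0 →
        f1 (x, v + w, t) = f1 (x + t • w, v, t) + f1 (x, w, t) := by
      intro t ht htne
      have e1 := hdq x (v + w) t hx ht.1
      have e2 := hdq (x + t • w) v t ht.2.1 ht.2.2
      have e3 := hdq x w t hx ht.2.1
      have hxe : x + t • (v + w) = x + t • w + t • v := by
        rw [smul_add]; abel
      have key : t • f1 (x, v + w, t) = t • (f1 (x + t • w, v, t) + f1 (x, w, t)) := by
        rw [smul_add, ← e2, ← e3, ← e1, hxe]; abel
      have := congrArg (fun y => t⁻¹ • y) key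
      simpa [smul_smul, inv_mul_cancel₀ htne] using this
    have := bgn_key hK hSopen h0S hgc hhc heq
    simpa using this
  · intro r v
    set S : Set 𝕂 := {t : 𝕂 | x + (t * r) • v ∈ U} with hSdefB
    have hSopen : IsOpen S := hU.preimage (by fun_prop)
    have h0S : (0:𝕂) ∈ S := by simp [hSdefB, hx]
    have hmem : ∀ t ∈ S, x + t • (r • v) ∈ U := by
      intro t ht
      rw [smul_smul]
      exact ht
    have hgc : ContinuousWithinAt (fun t : 𝕂 => f1 (x, r • v, t)) S 0 := by
      refine (hcont.comp (Continuous.continuousOn (by fun_prop)) ?_).continuousWithinAt h0S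
      intro t ht
      exact ⟨hx, hmem t ht⟩
    have hhc : ContinuousWithinAt (fun t : 𝕂 => r • f1 (x, v, t * r)) S 0 := by
      have c : ContinuousOn (fun t : 𝕂 => f1 (x, v, t * r)) S := by
        refine hcont.comp (Continuous.continuousOn (by fun_prop)) ?_
        intro t ht
        exact ⟨hx, ht⟩
      exact (c.const_smul r).continuousWithinAt h0S
    have heq : ∀ t ∈ S, t ≠ 0 →
        f1 (x, r • v, t) = r • f1 (x, v, t * r) := by
      intro t ht htne
      have e1 := hdq x (r • v) t hx (hmem t ht)
      have e2 := hdq x v (t * r) hx ht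
      have hxe : x + t • (r • v) = x + (t * r) • v := by rw [smul_smul]
      have key : t • f1 (x, r • v, t) = t • (r • f1 (x, v, t * r)) := by
        rw [smul_smul, ← e2, ← e1, hxe]
      have := congrArg (fun y => t⁻¹ • y) key
      simpa [smul_smul, ← mul_assoc, inv_mul_cancel₀ htne] using this
    have := bgn_key hK hSopen h0S hgc hhc heq
    simpa using this
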